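/- For every n ≥ 6, the 3-graph H_1 satisfies λ(H_1) < √3/18, where H_1 is the 3-graph on vertex set [n] whose edge set is ( {e ⊆ [n] : |e|=3, e ∩ {1,2} ≠ ∅} \ {{2,i,j} : i,j ∈ [n]\{1,2,3,4,5,6}} ) ∪ {{3,4,5},{3,4,6}}. -/

import Mathlib

open Finset

/-- An `r`-uniform hypergraph (r-graph) with vertices drawn from `ℕ`. -/
structure HyperGraph (r : ℕ) where
  verts : Finset ℕ
  edges : Finset (Finset ℕ)
  edges_sub : ∀ e ∈ edges, e ⊆ verts
  card_eq : ∀ e ∈ edges, e.card = r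

/-- A 3-uniform hypergraph (3-graph). -/
abbrev ThreeGraph := HyperGraph 3

/-- A feasible weight vector on `G`: nonnegative weights on the vertices summing to 1. -/
def HyperGraph.IsFeasible {r : ℕ} (G : HyperGraph r) (w : ℕ → ℝ) : Prop :=
  (∀ v ∈ G.verts, 0 ≤ w v) ∧ ∑ v ∈ G.verts, w v = 1

/-- The Lagrangian function `λ(G, w) = Σ_{e ∈ E(G)} Π_{v ∈ e} w v`. -/
noncomputable def HyperGraph.lagFun {r : ℕ} (G : HyperGraph r) (w : ℕ → ℝ) : ℝ :=
  ∑ e ∈ G.edges, ∏ v ∈ e, w v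

/-- The Lagrangian `λ(G)`: the maximum of `λ(G, w)` over feasible weight vectors. -/
noncomputable def HyperGraph.lag {r : ℕ} (G : HyperGraph r) : ℝ :=
  sSup {x : ℝ | ∃ w, G.IsFeasible w ∧ G.lagFun w = x}

/-- `G` contains a copy of `F`: an injection of the vertices of `F` into those of `G`
mapping every edge of `F` to an edge of `G`. -/
def HyperGraph.ContainsCopy {r : ℕ} (G F : HyperGraph r) : Prop :=
  ∃ f : ℕ → ℕ, Set.InjOn f ↑F.verts ∧ (∀ v ∈ F.verts, f v ∈ G.verts) ∧
    ∀ e ∈ F.edges, e.image f ∈ G.edges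

/-- `G` is `F`-free. -/
def HyperGraph.Free {r : ℕ} (G F : HyperGraph r) : Prop := ¬ G.ContainsCopy F

/-- `H` is a subgraph of `G`. -/
def HyperGraph.IsSubgraph {r : ℕ} (H G : HyperGraph r) : Prop :=
  H.verts ⊆ G.verts ∧ H.edges ⊆ G.edges

/-- `G` is dense: every proper subgraph has strictly smaller Lagrangian. -/
def HyperGraph.LagDense {r : ℕ} (G : HyperGraph r) : Prop :=
  ∀ H : HyperGraph r, H.IsSubgraph G → (H.verts ≠ G.verts ∨ H.edges ≠ G.edges) →
    H.lag < G.lag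

/-- The Lagrangian density `π_λ(F) = sup { r! · λ(G) : G is F-free }`. -/
noncomputable def lagDensity {r : ℕ} (F : HyperGraph r) : ℝ :=
  sSup {x : ℝ | ∃ G : HyperGraph r, G.Free F ∧ x = (Nat.factorial r : ℝ) * G.lag}

/-- An optimum weight vector for `G`. -/
def HyperGraph.IsOptimal {r : ℕ} (G : HyperGraph r) (w : ℕ → ℝ) : Prop :=
  G.IsFeasible w ∧ G.lagFun w = G.lag

/-- `K_4^3 ∪ e`: the disjoint union of the complete 3-graph on `{1,2,3,4}`
and the single edge `{5,6,7}`. -/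
def K43e : ThreeGraph where
  verts := {1, 2, 3, 4, 5, 6, 7}
  edges := {{1, 2, 3}, {1, 2, 4}, {1, 3, 4}, {2, 3, 4}, {5, 6, 7}}
  edges_sub := by decide
  card_eq := by decide

/-- `H_1` (for `n ≥ 6`): the 3-graph on `[n]` whose edges are the 3-subsets meeting
`{1, 2}`, minus all edges `{2, i, j}` with `i, j ∈ [n] \ {1,…,6}`, plus the two edges
`{3,4,5}` and `{3,4,6}`. -/
def H1 (n : ℕ) (hn : 6 ≤ n) : ThreeGraph where
  verts := Finset.Icc 1 n
  edges := ((((Finset.Icc 1 n).powersetCard 3).filter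
        (fun e => (e ∩ ({1, 2} : Finset ℕ)).Nonempty)) \
      (((Finset.Icc 1 n \ ({1, 2, 3, 4, 5, 6} : Finset ℕ)).powersetCard 2).image
        (insert 2))) ∪
    ({{3, 4, 5}, {3, 4, 6}} : Finset (Finset ℕ))
  edges_sub := by
    intro e he
    rw [Finset.mem_union] at he
    rcases he with h | h
    · have h' := (Finset.mem_sdiff.mp h).1
      rw [Finset.mem_filter, Finset.mem_powersetCard] at h'
      exact h'.1.1
    · simp only [Finset.mem_insert, Finset.mem_singleton] at h
      rcases h with rfl | rfl <;> intro v hv <;>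
        simp only [Finset.mem_insert, Finset.mem_singleton] at hv <;>
        rw [Finset.mem_Icc] <;> rcases hv with rfl | rfl | rfl <;> omega
  card_eq := by
    intro e he
    rw [Finset.mem_union] at he
    rcases he with h | h
    · have h' := (Finset.mem_sdiff.mp h).1
      rw [Finset.mem_filter, Finset.mem_powersetCard] at h'
      exact h'.1.2
    · simp only [Finset.mem_insert, Finset.mem_singleton] at h
      rcases h with rfl | rfl <;> decide

/-- For every `n ≥ 6`, `λ(H_1) < √3/18`. -/

lemma amgm3 (x y z : ℝ) (hx : 0 ≤ x) (hy : 0 ≤ y) (hz : 0 ≤ z) :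
    x*y*z ≤ (x+y+z)^3/27 := by
  nlinarith [sq_nonneg (x-y), sq_nonneg (y-z), sq_nonneg (x-z), mul_nonneg hx hy,
    mul_nonneg hy hz, mul_nonneg hx hz, mul_nonneg (mul_nonneg hx hy) hz,
    sq_nonneg (x+y-2*z), sq_nonneg (x+z-2*y), sq_nonneg (y+z-2*x)]

lemma sum_image_insert (w : ℕ → ℝ) (x : ℕ) (S : Finset ℕ) (k : ℕ) (hx : x ∉ S) :
    ∑ e ∈ (S.powersetCard k).image (insert x), ∏ v ∈ e, w v
      = w x * ∑ p ∈ S.powersetCard k, ∏ v ∈ p, w v := by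
  rw [Finset.sum_image, Finset.mul_sum]
  · apply Finset.sum_congr rfl
    intro p hp
    rw [Finset.mem_powersetCard] at hp
    rw [Finset.prod_insert (fun h => hx (hp.1 h))]
  · intro p hp q hq h
    rw [Finset.mem_coe, Finset.mem_powersetCard] at hp hq
    have hxp : x ∉ p := fun h => hx (hp.1 h)
    have hxq : x ∉ q := fun h => hx (hq.1 h)
    rw [← Finset.erase_insert hxp, ← Finset.erase_insert hxq, h]

lemma e2_insert (w : ℕ → ℝ) (x : ℕ) (S : Finset ℕ) (hx : x ∉ S) :
    ∑ p ∈ (insert x S).powersetCard 2, ∏ v ∈ p, w v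
      = w x * ∑ v ∈ S, w v + ∑ p ∈ S.powersetCard 2, ∏ v ∈ p, w v := by
  rw [show (2:ℕ) = Nat.succ 1 from rfl, Finset.powersetCard_succ_insert hx]
  rw [Finset.sum_union]
  · rw [sum_image_insert w x S 1 hx, Finset.powersetCard_one, Finset.sum_map]
    simp only [Function.Embedding.coeFn_mk, Finset.prod_singleton]
    ring
  · rw [Finset.disjoint_right]
    intro e he hne
    rw [Finset.mem_image] at he
    rw [Finset.mem_powersetCard] at hne
    obtain ⟨p, hp, rfl⟩ := he
    exact hx (hne.1 (Finset.mem_insert_self x p))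

lemma e2_le (w : ℕ → ℝ) (S : Finset ℕ) :
    ∑ p ∈ S.powersetCard 2, ∏ v ∈ p, w v ≤ (∑ v ∈ S, w v)^2/2 := by
  induction S using Finset.induction_on with
  | empty =>
      rw [show Finset.powersetCard 2 (∅:Finset ℕ) = ∅ by decide]
      simp
  | @insert x s hx ih =>
      rw [e2_insert w x s hx, Finset.sum_insert hx]
      nlinarith [sq_nonneg (w x)]

lemma e2_nonneg (w : ℕ → ℝ) (S : Finset ℕ) (h : ∀ v ∈ S, 0 ≤ w v) :
    0 ≤ ∑ p ∈ S.powersetCard 2, ∏ v ∈ p, w v := by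
  apply Finset.sum_nonneg
  intro p hp
  rw [Finset.mem_powersetCard] at hp
  exact Finset.prod_nonneg fun v hv => h v (hp.1 hv)

lemma Icc_insert (a b : ℕ) (h : a ≤ b) : Finset.Icc a b = insert a (Finset.Icc (a+1) b) := by
  ext x; simp only [Finset.mem_Icc, Finset.mem_insert]; omega

lemma not_mem_Icc_succ (a b : ℕ) : a ∉ Finset.Icc (a+1) b := by
  simp only [Finset.mem_Icc]; omega
set_option maxHeartbeats 1000000 in
theorem keyineq (a b t u : ℝ) (ha : 0 ≤ a) (hb : 0 ≤ b) (ht : 0 ≤ t) (hu : 0 ≤ u)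
    (hs : a + b + t + u = 1) :
    a*b*(t+u) + (a+b)*(3*t^2/8 + t*u) + a*(u^2/2) + t^3/27 ≤ 19/200 := by
  have hcube : (a+b+t+u)^3 = 1 := by rw [hs]; norm_num
  have g1 : (0:ℝ) ≤ a*(2*b - t)^2 := by positivity
  have g2 : (0:ℝ) ≤ a*(a - 2*b + t)^2 := by positivity
  have g3 : (0:ℝ) ≤ a*(a + b - t)^2 := by positivity
  have g4 : (0:ℝ) ≤ a*(2*a - b)^2 := by positivity
  have g5 : (0:ℝ) ≤ b*(2*b - t)^2 := by positivity
  have g6 : (0:ℝ) ≤ b*(a + b - t)^2 := by positivity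
  have g7 : (0:ℝ) ≤ b*(2*a - t)^2 := by positivity
  have g8 : (0:ℝ) ≤ b*(2*a + 2*b - t - u)^2 := by positivity
  have g9 : (0:ℝ) ≤ a*a*u := by positivity
  have g10 : (0:ℝ) ≤ t*(a - 2*b + u)^2 := by positivity
  have g11 : (0:ℝ) ≤ t*(a + b - u)^2 := by positivity
  have g12 : (0:ℝ) ≤ t*(a + 2*b - t - u)^2 := by positivity
  have g13 : (0:ℝ) ≤ t*(a + 2*b - 2*u)^2 := by positivity
  have g14 : (0:ℝ) ≤ t*(2*a - b)^2 := by positivity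
  have g15 : (0:ℝ) ≤ t*(2*a - u)^2 := by positivity
  have g16 : (0:ℝ) ≤ t*(2*a + 2*b - t - 2*u)^2 := by positivity
  have g17 : (0:ℝ) ≤ u*(a - b - t - u)^2 := by positivity
  have g18 : (0:ℝ) ≤ u*(a - 2*b)^2 := by positivity
  have g19 : (0:ℝ) ≤ u*(a - 2*b + t - u)^2 := by positivity
  have g20 : (0:ℝ) ≤ u*(2*a - 2*b - 2*t - u)^2 := by positivity
  linarith [hcube,g1,g2,g3,g4,g5,g6,g7,g8,g9,g10,g11,g12,g13,g14,g15,g16,g17,g18,g19,g20]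

set_option maxHeartbeats 2000000 in
lemma lagFun_bound (n : ℕ) (hn : 6 ≤ n) (w : ℕ → ℝ) (hf : (H1 n hn).IsFeasible w) :
    (H1 n hn).lagFun w ≤ 19/200 := by
  obtain ⟨hpos, hsum⟩ := hf
  have hpos' : ∀ v ∈ Finset.Icc 1 n, 0 ≤ w v := hpos
  have hsum' : ∑ v ∈ Finset.Icc 1 n, w v = 1 := hsum
  -- abbreviations
  set A := (((Finset.Icc 1 n).powersetCard 3).filter
      (fun e => (e ∩ ({1, 2} : Finset ℕ)).Nonempty)) with hA
  set B := (((Finset.Icc 1 n \ ({1, 2, 3, 4, 5, 6} : Finset ℕ)).powersetCard 2).image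
      (insert 2)) with hBdef
  have hlag : (H1 n hn).lagFun w = ∑ e ∈ (A \ B) ∪ ({{3,4,5},{3,4,6}} : Finset (Finset ℕ)),
      ∏ v ∈ e, w v := rfl
  -- the sdiff set R
  have hR : Finset.Icc 1 n \ ({1, 2, 3, 4, 5, 6} : Finset ℕ) = Finset.Icc 7 n := by
    ext x
    simp only [Finset.mem_sdiff, Finset.mem_Icc, Finset.mem_insert, Finset.mem_singleton]
    omega
  -- B ⊆ A
  have hBA : B ⊆ A := by
    intro e he
    rw [hBdef, hR, Finset.mem_image] at he
    obtain ⟨p, hp, rfl⟩ := he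
    rw [Finset.mem_powersetCard] at hp
    have h2p : (2:ℕ) ∉ p := by
      intro h
      have := hp.1 h
      rw [Finset.mem_Icc] at this
      omega
    rw [hA, Finset.mem_filter, Finset.mem_powersetCard]
    refine ⟨⟨?_, ?_⟩, ⟨2, ?_⟩⟩
    · apply Finset.insert_subset
      · rw [Finset.mem_Icc]; omega
      · intro v hv
        have := hp.1 hv
        rw [Finset.mem_Icc] at this ⊢
        omega
    · rw [Finset.card_insert_of_notMem h2p, hp.2]
    · rw [Finset.mem_inter]
      exact ⟨Finset.mem_insert_self 2 p, by decide⟩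
  -- disjointness with the two extra edges
  have hdisj : Disjoint (A \ B) ({{3,4,5},{3,4,6}} : Finset (Finset ℕ)) := by
    rw [Finset.disjoint_right]
    intro e he hmem
    have hmemA := (Finset.mem_sdiff.mp hmem).1
    rw [hA, Finset.mem_filter] at hmemA
    simp only [Finset.mem_insert, Finset.mem_singleton] at he
    rcases he with rfl | rfl
    · exact absurd hmemA.2 (by decide)
    · exact absurd hmemA.2 (by decide)
  -- split A into edges containing 1 and edges containing 2 but not 1
  have hAsplit : A = ((Finset.Icc 2 n).powersetCard 2).image (insert 1) ∪
      ((Finset.Icc 3 n).powersetCard 2).image (insert 2) := by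
    ext e
    rw [hA, Finset.mem_filter, Finset.mem_powersetCard, Finset.mem_union,
      Finset.mem_image, Finset.mem_image]
    constructor
    · rintro ⟨⟨hsub, hcard⟩, hne⟩
      by_cases h1 : (1:ℕ) ∈ e
      · left
        refine ⟨e.erase 1, ?_, Finset.insert_erase h1⟩
        rw [Finset.mem_powersetCard]
        constructor
        · intro v hv
          have hv1 := (Finset.mem_erase.mp hv).1
          have := hsub (Finset.erase_subset _ _ hv)
          rw [Finset.mem_Icc] at this ⊢
          omega
        · rw [Finset.card_erase_of_mem h1, hcard]
      · right
        have h2 : (2:ℕ) ∈ e := by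
          obtain ⟨x, hx⟩ := hne
          rw [Finset.mem_inter] at hx
          have := hx.2
          simp only [Finset.mem_insert, Finset.mem_singleton] at this
          rcases this with rfl | rfl
          · exact absurd hx.1 h1
          · exact hx.1
        refine ⟨e.erase 2, ?_, Finset.insert_erase h2⟩
        rw [Finset.mem_powersetCard]
        constructor
        · intro v hv
          have hv2 := (Finset.mem_erase.mp hv).1
          have hv' := Finset.erase_subset _ _ hv
          have := hsub hv'
          have hv1 : v ≠ 1 := by rintro rfl; exact h1 hv'
          rw [Finset.mem_Icc] at this ⊢
          omega
        · rw [Finset.card_erase_of_mem h2, hcard]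
    · rintro (⟨p, hp, rfl⟩ | ⟨p, hp, rfl⟩) <;> rw [Finset.mem_powersetCard] at hp
      · have h1p : (1:ℕ) ∉ p := by
          intro h; have := hp.1 h; rw [Finset.mem_Icc] at this; omega
        refine ⟨⟨?_, ?_⟩, ⟨1, ?_⟩⟩
        · apply Finset.insert_subset
          · rw [Finset.mem_Icc]; omega
          · intro v hv; have := hp.1 hv; rw [Finset.mem_Icc] at this ⊢; omega
        · rw [Finset.card_insert_of_notMem h1p, hp.2]
        · rw [Finset.mem_inter]
          exact ⟨Finset.mem_insert_self 1 p, by decide⟩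
      · have h2p : (2:ℕ) ∉ p := by
          intro h; have := hp.1 h; rw [Finset.mem_Icc] at this; omega
        refine ⟨⟨?_, ?_⟩, ⟨2, ?_⟩⟩
        · apply Finset.insert_subset
          · rw [Finset.mem_Icc]; omega
          · intro v hv; have := hp.1 hv; rw [Finset.mem_Icc] at this ⊢; omega
        · rw [Finset.card_insert_of_notMem h2p, hp.2]
        · rw [Finset.mem_inter]
          exact ⟨Finset.mem_insert_self 2 p, by decide⟩
  have hA12disj : Disjoint (((Finset.Icc 2 n).powersetCard 2).image (insert 1))
      (((Finset.Icc 3 n).powersetCard 2).image (insert 2)) := by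
    rw [Finset.disjoint_left]
    intro e he1 he2
    rw [Finset.mem_image] at he1 he2
    obtain ⟨p, hp, rfl⟩ := he1
    obtain ⟨q, hq, heq⟩ := he2
    rw [Finset.mem_powersetCard] at hp hq
    have h1 : (1:ℕ) ∈ insert 2 q := by rw [heq]; exact Finset.mem_insert_self 1 p
    rw [Finset.mem_insert] at h1
    rcases h1 with h | h
    · omega
    · have := hq.1 h; rw [Finset.mem_Icc] at this; omega
  -- not-mem facts
  have h1n2 : (1:ℕ) ∉ Finset.Icc 2 n := by rw [Finset.mem_Icc]; omega
  have h2n3 : (2:ℕ) ∉ Finset.Icc 3 n := by rw [Finset.mem_Icc]; omega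
  have h2n7 : (2:ℕ) ∉ Finset.Icc 7 n := by rw [Finset.mem_Icc]; omega
  -- sum over A
  have hAsum : ∑ e ∈ A, ∏ v ∈ e, w v
      = w 1 * ∑ p ∈ (Finset.Icc 2 n).powersetCard 2, ∏ v ∈ p, w v
      + w 2 * ∑ p ∈ (Finset.Icc 3 n).powersetCard 2, ∏ v ∈ p, w v := by
    rw [hAsplit, Finset.sum_union hA12disj, sum_image_insert w 1 _ 2 h1n2,
      sum_image_insert w 2 _ 2 h2n3]
  -- sum over B
  have hBsum : ∑ e ∈ B, ∏ v ∈ e, w v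
      = w 2 * ∑ p ∈ (Finset.Icc 7 n).powersetCard 2, ∏ v ∈ p, w v := by
    rw [hBdef, hR, sum_image_insert w 2 _ 2 h2n7]
  -- e1 expansions
  have e1_7 := (Finset.sum_nonneg (fun v hv => hpos' v (by
    rw [Finset.mem_Icc] at hv ⊢; omega)) : 0 ≤ ∑ v ∈ Finset.Icc 7 n, w v)
  have hIcc : ∀ k, 1 ≤ k → k ≤ 6 →
      (∑ v ∈ Finset.Icc k n, w v) = w k + ∑ v ∈ Finset.Icc (k+1) n, w v := by
    intro k hk1 hk6
    rw [Icc_insert k n (by omega), Finset.sum_insert (not_mem_Icc_succ k n)]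
  have hs1 := hIcc 1 (by omega) (by omega)
  have hs2 := hIcc 2 (by omega) (by omega)
  have hs3 := hIcc 3 (by omega) (by omega)
  have hs4 := hIcc 4 (by omega) (by omega)
  have hs5 := hIcc 5 (by omega) (by omega)
  have hs6 := hIcc 6 (by omega) (by omega)
  -- e2 expansions
  have hIcc2 : ∀ k, 1 ≤ k → k ≤ 6 →
      (∑ p ∈ (Finset.Icc k n).powersetCard 2, ∏ v ∈ p, w v)
        = w k * (∑ v ∈ Finset.Icc (k+1) n, w v)
          + ∑ p ∈ (Finset.Icc (k+1) n).powersetCard 2, ∏ v ∈ p, w v := by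
    intro k hk1 hk6
    rw [Icc_insert k n (by omega)]
    exact e2_insert w k _ (not_mem_Icc_succ k n)
  have he2_2 := hIcc2 2 (by omega) (by omega)
  have he2_3 := hIcc2 3 (by omega) (by omega)
  have he2_4 := hIcc2 4 (by omega) (by omega)
  have he2_5 := hIcc2 5 (by omega) (by omega)
  have he2_6 := hIcc2 6 (by omega) (by omega)
  have hU2nn := e2_nonneg w (Finset.Icc 7 n) (fun v hv => hpos' v (by
    rw [Finset.mem_Icc] at hv ⊢; omega))
  have hU2le := e2_le w (Finset.Icc 7 n)
  -- nonnegativity of individual weights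
  have hw : ∀ k, 1 ≤ k → k ≤ 6 → 0 ≤ w k := fun k hk1 hk6 =>
    hpos' k (by rw [Finset.mem_Icc]; omega)
  have hw1 := hw 1 (by omega) (by omega)
  have hw2 := hw 2 (by omega) (by omega)
  have hw3 := hw 3 (by omega) (by omega)
  have hw4 := hw 4 (by omega) (by omega)
  have hw5 := hw 5 (by omega) (by omega)
  have hw6 := hw 6 (by omega) (by omega)
  -- name the tail quantities
  set u := ∑ v ∈ Finset.Icc 7 n, w v with hu
  set U2 := ∑ p ∈ (Finset.Icc 7 n).powersetCard 2, ∏ v ∈ p, w v with hU2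
  -- total sum
  have htot : w 1 + w 2 + w 3 + w 4 + w 5 + w 6 + u = 1 := by
    rw [hs1, hs2, hs3, hs4, hs5, hs6] at hsum'
    linarith
  -- the main expression
  have hCval : ∑ e ∈ ({{3,4,5},{3,4,6}} : Finset (Finset ℕ)), ∏ v ∈ e, w v
      = w 3 * w 4 * w 5 + w 3 * w 4 * w 6 := by
    rw [Finset.sum_insert (by decide), Finset.sum_singleton]
    have p1 : ∏ v ∈ ({3,4,5} : Finset ℕ), w v = w 3 * w 4 * w 5 := by
      rw [Finset.prod_insert (by decide), Finset.prod_insert (by decide),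
        Finset.prod_singleton]; ring
    have p2 : ∏ v ∈ ({3,4,6} : Finset ℕ), w v = w 3 * w 4 * w 6 := by
      rw [Finset.prod_insert (by decide), Finset.prod_insert (by decide),
        Finset.prod_singleton]; ring
    rw [p1, p2]
  have hL : (H1 n hn).lagFun w
      = w 1 * w 2 * ((w 3 + w 4 + w 5 + w 6) + u)
        + (w 1 + w 2) * ((w 3*w 4 + w 3*w 5 + w 3*w 6 + w 4*w 5 + w 4*w 6 + w 5*w 6)
            + (w 3 + w 4 + w 5 + w 6) * u)
        + w 1 * U2 + (w 3 * w 4 * w 5 + w 3 * w 4 * w 6) := by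
    rw [hlag, Finset.sum_union hdisj, Finset.sum_sdiff_eq_sub hBA, hAsum, hBsum, hCval,
      he2_2, he2_3, he2_4, he2_5, he2_6, hs3, hs4, hs5, hs6]
    ring
  -- final numeric bound
  have key := keyineq (w 1) (w 2) (w 3 + w 4 + w 5 + w 6) u hw1 hw2
    (by linarith) e1_7 (by linarith)
  have F2 : w 3*w 4 + w 3*w 5 + w 3*w 6 + w 4*w 5 + w 4*w 6 + w 5*w 6
      ≤ 3 * (w 3 + w 4 + w 5 + w 6)^2 / 8 := by
    nlinarith [sq_nonneg (w 3 - w 4), sq_nonneg (w 3 - w 5), sq_nonneg (w 3 - w 6),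
      sq_nonneg (w 4 - w 5), sq_nonneg (w 4 - w 6), sq_nonneg (w 5 - w 6)]
  have m1 : (w 1 + w 2) * ((w 3*w 4 + w 3*w 5 + w 3*w 6 + w 4*w 5 + w 4*w 6 + w 5*w 6)
        + (w 3 + w 4 + w 5 + w 6) * u)
      ≤ (w 1 + w 2) * (3 * (w 3 + w 4 + w 5 + w 6)^2 / 8 + (w 3 + w 4 + w 5 + w 6) * u) :=
    mul_le_mul_of_nonneg_left (by linarith) (by linarith)
  have m2 : w 1 * U2 ≤ w 1 * (u^2/2) := mul_le_mul_of_nonneg_left hU2le hw1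
  have F1 : w 3 * w 4 * w 5 + w 3 * w 4 * w 6 ≤ (w 3 + w 4 + w 5 + w 6)^3 / 27 := by
    have := amgm3 (w 3) (w 4) (w 5 + w 6) hw3 hw4 (by linarith)
    nlinarith [this]
  rw [hL]
  nlinarith [key, m1, m2, F1]

theorem lag_H1 (n : ℕ) (hn : 6 ≤ n) : (H1 n hn).lag < Real.sqrt 3 / 18 := by
  have hb : (H1 n hn).lag ≤ 19/200 := by
    apply Real.sSup_le
    · rintro x ⟨w, hw, rfl⟩
      exact lagFun_bound n hn w hw
    · norm_num
  have hsq : (171/100 : ℝ) < Real.sqrt 3 := by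
    rw [show (171/100 : ℝ) = Real.sqrt ((171/100)^2) from
      (Real.sqrt_sq (by norm_num)).symm]
    apply Real.sqrt_lt_sqrt <;> norm_num
  linarith
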